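/- Let a and k be positive integers with k > a. Suppose C(2a, a) divides C(2k, k) (i.e. their quotient is an integer) and p is a prime with p > 3(k - a) such that p divides the product (2a+1)(2a+2)⋯(2k). Then p does not divide the product (a+1)(a+2)⋯k, and p divides C(2k, k) / C(2a, a). -/

import Mathlib

open Finset

private lemma fact_prod_aux (a : ℕ) : ∀ k, a ≤ k →
    a.factorial * ∏ i ∈ Finset.Icc (a+1) k, i = k.factorial := by
  intro k
  induction k with
  | zero => intro h; interval_cases a; simp
  | succ n ih =>
    intro h
    rcases Nat.lt_or_ge a (n+1) with h'|h'
    · have han : a ≤ n := Nat.lt_succ_iff.mp h'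
      rw [Finset.prod_Icc_succ_top (by omega : a + 1 ≤ n + 1), ← Nat.mul_assoc,
        ih han, Nat.factorial_succ, Nat.mul_comm]
    · have : a = n + 1 := le_antisymm h h'
      subst this
      simp

theorem stmt_12 (a k : ℕ) (ha : 0 < a) (hak : a < k)
    (hdvd : Nat.choose (2 * a) a ∣ Nat.choose (2 * k) k)
    (p : ℕ) (hp : p.Prime) (hp3 : p > 3 * (k - a))
    (hpdvd : p ∣ ∏ i ∈ Finset.Icc (2 * a + 1) (2 * k), i) :
    ¬ p ∣ (∏ i ∈ Finset.Icc (a + 1) k, i) ∧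
      p ∣ Nat.choose (2 * k) k / Nat.choose (2 * a) a := by
  set N := ∏ i ∈ Finset.Icc (2 * a + 1) (2 * k), i with hNdef
  set D := ∏ i ∈ Finset.Icc (a + 1) k, i with hDdef
  have hD : a.factorial * D = k.factorial := fact_prod_aux a k (le_of_lt hak)
  have hN : (2*a).factorial * N = (2*k).factorial := fact_prod_aux (2*a) (2*k) (by omega)
  have hck : Nat.choose (2*k) k * (k.factorial * k.factorial) = (2*k).factorial := by
    have := Nat.choose_mul_factorial_mul_factorial (show k ≤ 2*k by omega)
    rw [show 2*k - k = k by omega] at this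
    linarith [this]
  have hca : Nat.choose (2*a) a * (a.factorial * a.factorial) = (2*a).factorial := by
    have := Nat.choose_mul_factorial_mul_factorial (show a ≤ 2*a by omega)
    rw [show 2*a - a = a by omega] at this
    linarith [this]
  -- the key identity: C(2k,k) * D^2 = C(2a,a) * N
  have key : Nat.choose (2*k) k * D^2 = Nat.choose (2*a) a * N := by
    have hpos : 0 < a.factorial * a.factorial * (2*a).factorial := by positivity
    apply Nat.eq_of_mul_eq_mul_left hpos
    have e1 : a.factorial * a.factorial * (2*a).factorial * (Nat.choose (2*k) k * D^2)
        = Nat.choose (2*k) k * ((a.factorial * D) * (a.factorial * D)) * (2*a).factorial := by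
      ring
    have e2 : a.factorial * a.factorial * (2*a).factorial * (Nat.choose (2*a) a * N)
        = (Nat.choose (2*a) a * (a.factorial * a.factorial)) * ((2*a).factorial * N) := by
      ring
    rw [e1, e2, hD, hca, hN, hck]
    ring
  obtain ⟨q, hq⟩ := hdvd
  have hqdiv : Nat.choose (2*k) k / Nat.choose (2*a) a = q := by
    rw [hq, Nat.mul_div_cancel_left _ (Nat.choose_pos (by omega))]
  have hkey2 : q * D^2 = N := by
    have h2 : Nat.choose (2*a) a * (q * D^2) = Nat.choose (2*a) a * N := by
      rw [← key, hq]; ring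
    exact Nat.eq_of_mul_eq_mul_left (Nat.choose_pos (by omega)) h2
  have hNpos : 0 < N := Finset.prod_pos (by intro i hi; simp at hi; omega)
  have hDpos : 0 < D := Finset.prod_pos (by intro i hi; simp at hi; omega)
  have hqpos : 0 < q := by
    rcases Nat.eq_zero_or_pos q with h|h
    · rw [h] at hkey2; simp at hkey2; omega
    · exact h
  have hp2 : ¬ (p ∣ 2) := fun h => by have := Nat.le_of_dvd (by norm_num) h; omega
  -- key: p does not divide D
  have hnd : ¬ p ∣ D := by
    intro hpD
    obtain ⟨j, hjmem, hpj⟩ := hp.prime.exists_mem_finset_dvd hpD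
    simp only [Finset.mem_Icc] at hjmem
    have hvj : 0 < j.factorization p := hp.factorization_pos_of_dvd (by omega) hpj
    -- v_p(D) ≥ v_p(j)
    have hvD : j.factorization p ≤ D.factorization p := by
      rw [hDdef, Nat.factorization_prod (fun i hi => by simp at hi; omega)]
      simp only [Finsupp.finset_sum_apply]
      exact Finset.single_le_sum (f := fun i => i.factorization p)
        (fun i _ => Nat.zero_le _) (Finset.mem_Icc.mpr hjmem)
    -- v_p(N) = v_p(2j) = v_p(j)
    have h2j : 2*j ∈ Finset.Icc (2*a+1) (2*k) := Finset.mem_Icc.mpr (by omega)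
    have hvN : N.factorization p = j.factorization p := by
      rw [hNdef, Nat.factorization_prod (fun i hi => by simp at hi; omega)]
      simp only [Finsupp.finset_sum_apply]
      rw [Finset.sum_eq_single_of_mem (2*j) h2j]
      · rw [Nat.factorization_mul (by norm_num) (by omega)]
        simp only [Finsupp.coe_add, Pi.add_apply]
        have h20 : (2:ℕ).factorization p = 0 := Nat.factorization_eq_zero_of_not_dvd hp2
        omega
      · intro i hi hne
        simp only [Finset.mem_Icc] at hi
        apply Nat.factorization_eq_zero_of_not_dvd
        intro hpi
        obtain ⟨m, hm⟩ := hpi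
        obtain ⟨n, hn⟩ := hpj
        apply hne
        have h2n : 2*j = p*(2*n) := by rw [hn]; ring
        -- both p*m and p*(2*n) lie in [2a+1, 2k], which has length < p
        rcases lt_trichotomy m (2*n) with h|h|h
        · exfalso
          have hle : p*m + p ≤ p*(2*n) := by
            calc p*m + p = p*(m+1) := by ring
            _ ≤ p*(2*n) := Nat.mul_le_mul (le_refl p) h
          omega
        · rw [hm, hn, h]; ring
        · exfalso
          have hle : p*(2*n) + p ≤ p*m := by
            calc p*(2*n) + p = p*(2*n+1) := by ring
            _ ≤ p*m := Nat.mul_le_mul (le_refl p) h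
          omega
    -- contradiction via q * D^2 = N
    have hfac : N.factorization p = q.factorization p + 2 * D.factorization p := by
      rw [← hkey2, Nat.factorization_mul (by omega) (by positivity),
        Nat.factorization_pow]
      simp
    omega
  refine ⟨hnd, ?_⟩
  rw [hqdiv]
  have hpN : p ∣ q * D^2 := by rw [hkey2]; exact hpdvd
  rcases (hp.dvd_mul.mp hpN) with h|h
  · exact h
  · exact absurd (hp.dvd_of_dvd_pow h) hnd
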